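/- arXiv:2402.11717 — 3 statements merged into one kernel-verified Lean document; each statement's English description precedes it below -/
import Mathlib

section
/- For positive integers m, n with partitions λ = (λ₁ ≥ … ≥ λₙ ≥ 0) and ν = (ν₁ ≥ … ≥ νₙ ≥ 0), and complex numbers x₁, …, xₘ, the determinant of the n×n matrix with (i,j)-entry ∑_{k=1}^m conj(xₖ)^{λᵢ+n-i} · xₖ^{νⱼ+n-j} equals ∑_{k ∈ C([m],n)} conj(s_λ(x_k)) · s_ν(x_k) · |V(x_k)|², where the sum is over n-element subsets k = {k₁ < … < kₙ} of {1,…,m}, x_k = (x_{k₁},…,x_{kₙ}), s_λ denotes the Schur polynomial in n variables, and V denotes the Vandermonde determinant. -/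
open scoped BigOperators ComplexConjugate

/-- Vandermonde product `V(z) = ∏_{i<j} (z_i − z_j)`. -/
noncomputable def vand {n : ℕ} (z : Fin n → ℂ) : ℂ :=
  ∏ i : Fin n, ∏ j ∈ Finset.Ioi i, (z i - z j)

/-- Schur polynomial `s_λ(z) = det(z_i^{λ_j + n−1−j}) / V(z)` (junk value 0 if `V(z)=0`). -/
noncomputable def schur {n : ℕ} (lam : Fin n → ℕ) (z : Fin n → ℂ) : ℂ :=
  Matrix.det (Matrix.of fun i j : Fin n => z i ^ (lam j + (n - 1 - (j : ℕ)))) / vand z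

/-- The subvector of `x` indexed by an `n`-element subset of `Fin m` (in increasing order). -/
def subvec {m n : ℕ} (x : Fin m → ℂ) (s : {t : Finset (Fin m) // t.card = n}) :
    Fin n → ℂ := fun i => x (s.1.orderEmbOfFin s.2 i)


open Finset Equiv

lemma cb_aux {n m : ℕ} (A : Matrix (Fin n) (Fin m) ℂ) (B : Matrix (Fin m) (Fin n) ℂ)
    {p : Fin n → Fin m} (H : ¬Function.Injective p) :
    (∑ σ : Equiv.Perm (Fin n),
      ((Equiv.Perm.sign σ : ℤ) : ℂ) * ∏ x, A (σ x) (p x) * B (p x) x) = 0 := by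
  obtain ⟨i, j, hpij, hij⟩ : ∃ i j, p i = p j ∧ i ≠ j := by
    rw [Function.Injective] at H
    push_neg at H
    exact H
  exact Finset.sum_involution (fun σ _ => σ * Equiv.swap i j)
    (fun σ _ => by
      have : (∏ x, A (σ x) (p x)) = ∏ x, A ((σ * Equiv.swap i j) x) (p x) :=
        Fintype.prod_equiv (Equiv.swap i j) _ _ (by simp [Equiv.apply_swap_eq_self hpij])
      simp [this, Equiv.Perm.sign_swap hij, prod_mul_distrib])
    (fun σ _ _ => (not_congr Equiv.mul_swap_eq_iff).mpr hij) (fun _ _ => mem_univ _)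
    fun σ _ => Equiv.mul_swap_involutive i j σ

lemma det_mul_expand {n m : ℕ} (A : Matrix (Fin n) (Fin m) ℂ) (B : Matrix (Fin m) (Fin n) ℂ) :
    (A * B).det = ∑ p : Fin n → Fin m, ∑ σ : Equiv.Perm (Fin n),
      ((Equiv.Perm.sign σ : ℤ) : ℂ) * ∏ i, A (σ i) (p i) * B (p i) i := by
  simp only [Matrix.det_apply', Matrix.mul_apply, prod_univ_sum, Finset.mul_sum,
    Fintype.piFinset_univ]
  rw [Finset.sum_comm]

lemma image_embPerm {n m : ℕ} (s : {t : Finset (Fin m) // t.card = n}) (τ : Equiv.Perm (Fin n)) :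
    Finset.image (fun i => s.1.orderEmbOfFin s.2 (τ i)) Finset.univ = s.1 := by
  ext a
  simp only [mem_image, mem_univ, true_and]
  constructor
  · rintro ⟨i, rfl⟩
    have := Finset.range_orderEmbOfFin s.1 s.2
    have : s.1.orderEmbOfFin s.2 (τ i) ∈ Set.range (s.1.orderEmbOfFin s.2) := ⟨τ i, rfl⟩
    rwa [Finset.range_orderEmbOfFin, Finset.mem_coe] at this
  · intro ha
    have : a ∈ Set.range (s.1.orderEmbOfFin s.2) := by
      rw [Finset.range_orderEmbOfFin]; exact ha
    obtain ⟨i, hi⟩ := this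
    exact ⟨τ.symm i, by simp [hi]⟩

lemma sum_injective_eq {n m : ℕ} (G : (Fin n → Fin m) → ℂ) :
    ∑ p ∈ Finset.univ.filter (fun p => Function.Injective p), G p
      = ∑ s : {t : Finset (Fin m) // t.card = n}, ∑ τ : Equiv.Perm (Fin n),
          G (fun i => s.1.orderEmbOfFin s.2 (τ i)) := by
  have := (Fintype.sum_prod_type (f := fun (q : {t : Finset (Fin m) // t.card = n} × Equiv.Perm (Fin n)) => G (fun i => q.1.1.orderEmbOfFin q.1.2 (q.2 i))))
  rw [← this]
  refine (Finset.sum_bij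
    (fun (q : {t : Finset (Fin m) // t.card = n} × Equiv.Perm (Fin n)) _ =>
      (fun i => q.1.1.orderEmbOfFin q.1.2 (q.2 i))) ?_ ?_ ?_ ?_).symm
  · intro q _
    simp only [mem_filter, mem_univ, true_and]
    exact (q.1.1.orderEmbOfFin q.1.2).injective.comp q.2.injective
  · intro q _ q' _ h
    have hs : q.1 = q'.1 := by
      have := congrArg (Finset.image · Finset.univ) h
      simp only [image_embPerm] at this
      exact Subtype.ext this
    obtain ⟨⟨s, hs1⟩, τ⟩ := q
    obtain ⟨⟨s', hs1'⟩, τ'⟩ := q'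
    simp only [Subtype.mk.injEq] at hs
    subst hs
    have : τ = τ' := Equiv.coe_fn_injective
      (funext fun i => (s.orderEmbOfFin hs1).injective (congrFun h i))
    simp [this]
  · intro p hp
    simp only [mem_filter, mem_univ, true_and] at hp
    have hcard : (Finset.image p Finset.univ).card = n := by
      rw [Finset.card_image_of_injective _ hp, Finset.card_univ, Fintype.card_fin]
    set s : {t : Finset (Fin m) // t.card = n} := ⟨Finset.image p Finset.univ, hcard⟩ with hsdef
    have hmem : ∀ i, p i ∈ s.1 := fun i => Finset.mem_image_of_mem p (mem_univ i)
    set u : Fin n → Fin n := fun i => (s.1.orderIsoOfFin s.2).symm ⟨p i, hmem i⟩ with hu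
    have huinj : Function.Injective u := by
      intro a b hab
      have := congrArg (s.1.orderIsoOfFin s.2) hab
      simp only [hu, OrderIso.apply_symm_apply, Subtype.mk.injEq] at this
      exact hp this
    refine ⟨⟨s, Equiv.ofBijective u (Finite.injective_iff_bijective.1 huinj)⟩, mem_univ _, ?_⟩
    funext i
    show s.1.orderEmbOfFin s.2 (u i) = p i
    rw [← Finset.coe_orderIsoOfFin_apply]
    simp [hu]
  · intro q _
    rfl

lemma sum_injective_perm {n : ℕ} (H : (Fin n → Fin n) → ℂ) :
    ∑ p ∈ Finset.univ.filter (fun p => Function.Injective p), H p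
      = ∑ τ : Equiv.Perm (Fin n), H τ := by
  refine (Finset.sum_bij (fun (τ : Equiv.Perm (Fin n)) _ => (τ : Fin n → Fin n))
    ?_ ?_ ?_ ?_).symm
  · intro τ _
    simp only [mem_filter, mem_univ, true_and]
    exact τ.injective
  · intro τ _ τ' _ h
    exact Equiv.coe_fn_injective h
  · intro p hp
    simp only [mem_filter, mem_univ, true_and] at hp
    exact ⟨Equiv.ofBijective p (Finite.injective_iff_bijective.1 hp), mem_univ _, rfl⟩
  · intro τ _
    rfl

lemma det_square_expand {n : ℕ} (C D : Matrix (Fin n) (Fin n) ℂ) :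
    (C * D).det = ∑ τ : Equiv.Perm (Fin n), ∑ σ : Equiv.Perm (Fin n),
      ((Equiv.Perm.sign σ : ℤ) : ℂ) * ∏ i, C (σ i) (τ i) * D (τ i) i := by
  rw [det_mul_expand]
  rw [← sum_injective_perm (fun p => ∑ σ : Equiv.Perm (Fin n),
      ((Equiv.Perm.sign σ : ℤ) : ℂ) * ∏ i, C (σ i) (p i) * D (p i) i)]
  symm
  apply Finset.sum_subset (filter_subset _ _)
  intro p _ hp
  simp only [mem_filter, mem_univ, true_and] at hp
  exact cb_aux C D hp

lemma cauchy_binet {m n : ℕ} (A : Matrix (Fin n) (Fin m) ℂ) (B : Matrix (Fin m) (Fin n) ℂ) :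
    (A * B).det = ∑ s : {t : Finset (Fin m) // t.card = n},
      (A.submatrix id (s.1.orderEmbOfFin s.2)).det
        * (B.submatrix (s.1.orderEmbOfFin s.2) id).det := by
  rw [det_mul_expand]
  have h1 : ∑ p : Fin n → Fin m, ∑ σ : Equiv.Perm (Fin n),
        ((Equiv.Perm.sign σ : ℤ) : ℂ) * ∏ i, A (σ i) (p i) * B (p i) i
      = ∑ p ∈ Finset.univ.filter (fun p => Function.Injective p),
        ∑ σ : Equiv.Perm (Fin n),
        ((Equiv.Perm.sign σ : ℤ) : ℂ) * ∏ i, A (σ i) (p i) * B (p i) i := by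
    symm
    apply Finset.sum_subset (filter_subset _ _)
    intro p _ hp
    simp only [mem_filter, mem_univ, true_and] at hp
    exact cb_aux A B hp
  rw [h1, sum_injective_eq (fun p => ∑ σ : Equiv.Perm (Fin n),
      ((Equiv.Perm.sign σ : ℤ) : ℂ) * ∏ i, A (σ i) (p i) * B (p i) i)]
  refine Finset.sum_congr rfl fun s _ => ?_
  rw [← Matrix.det_mul, det_square_expand]
  rfl

/-- Cauchy–Binet for Schur/Vandermonde sums.
For partitions `λ, ν` with at most `n` parts and `x₁,…,xₘ ∈ ℂ`, the determinant of the
matrix with entries `∑ₖ conj(xₖ)^{λᵢ+n−i} xₖ^{νⱼ+n−j}` equals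
`∑_{k ∈ C([m],n)} conj(s_λ(x_k)) s_ν(x_k) |V(x_k)|²`. -/
theorem det_eq_sum_schur (m n : ℕ) (hm : 0 < m) (hn : 0 < n)
    (lam nu : Fin n → ℕ) (hlam : Antitone lam) (hnu : Antitone nu) (x : Fin m → ℂ) :
    Matrix.det (Matrix.of fun i j : Fin n =>
        ∑ k : Fin m, conj (x k) ^ (lam i + (n - 1 - (i : ℕ))) * x k ^ (nu j + (n - 1 - (j : ℕ)))) =
      ∑ s : {t : Finset (Fin m) // t.card = n},
        conj (schur lam (subvec x s)) * schur nu (subvec x s) *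
          ((‖vand (subvec x s)‖ : ℂ)) ^ 2 := by
  classical
  set A : Matrix (Fin n) (Fin m) ℂ :=
    Matrix.of (fun i k => conj (x k) ^ (lam i + (n - 1 - (i : ℕ)))) with hA
  set B : Matrix (Fin m) (Fin n) ℂ :=
    Matrix.of (fun k j => x k ^ (nu j + (n - 1 - (j : ℕ)))) with hB
  have hAB : Matrix.of (fun i j : Fin n =>
      ∑ k : Fin m, conj (x k) ^ (lam i + (n - 1 - (i : ℕ))) * x k ^ (nu j + (n - 1 - (j : ℕ))))
      = A * B := by
    ext i j
    simp [hA, hB, Matrix.mul_apply]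
  rw [hAB, cauchy_binet]
  refine Finset.sum_congr rfl fun s _ => ?_
  set z : Fin n → ℂ := subvec x s with hz
  have hdetB : (B.submatrix (s.1.orderEmbOfFin s.2) id).det
      = (Matrix.of fun i j : Fin n => z i ^ (nu j + (n - 1 - (j : ℕ)))).det := by
    congr 1
  have hdetA : (A.submatrix id (s.1.orderEmbOfFin s.2)).det
      = conj ((Matrix.of fun i j : Fin n => z i ^ (lam j + (n - 1 - (j : ℕ)))).det) := by
    have hm2 : A.submatrix id (s.1.orderEmbOfFin s.2)
        = (Matrix.of fun i j : Fin n => z i ^ (lam j + (n - 1 - (j : ℕ)))).conjTranspose := by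
      ext i j
      simp [hA, hz, subvec, Matrix.conjTranspose_apply]
    rw [hm2, Matrix.det_conjTranspose]
    rfl
  rw [hdetA, hdetB]
  set Nl : ℂ := (Matrix.of fun i j : Fin n => z i ^ (lam j + (n - 1 - (j : ℕ)))).det with hNl
  set Nn : ℂ := (Matrix.of fun i j : Fin n => z i ^ (nu j + (n - 1 - (j : ℕ)))).det with hNn
  have hschurl : schur lam z = Nl / vand z := rfl
  have hschurn : schur nu z = Nn / vand z := rfl
  rw [hschurl, hschurn]
  by_cases hV : vand z = 0
  · have hNl0 : Nl = 0 := by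
      obtain ⟨i, -, hi⟩ := Finset.prod_eq_zero_iff.1 hV
      obtain ⟨j, hj, hij0⟩ := Finset.prod_eq_zero_iff.1 hi
      have hzeq : z i = z j := sub_eq_zero.1 hij0
      have hij : i ≠ j := ne_of_lt (Finset.mem_Ioi.1 hj)
      refine Matrix.det_zero_of_row_eq hij ?_
      funext k
      show z i ^ (lam k + (n - 1 - (k : ℕ))) = z j ^ (lam k + (n - 1 - (k : ℕ)))
      rw [hzeq]
    simp [hNl0, hV]
  · have hVc : conj (vand z) ≠ 0 := by
      simpa using hV
    have habs : ((‖vand z‖ : ℝ) : ℂ) ^ 2 = conj (vand z) * vand z := by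
      rw [mul_comm, Complex.mul_conj]
      norm_cast
      exact Complex.sq_norm _
    rw [map_div₀, habs]
    field_simp
end

section
/- Let d₁ > d₂ > … > dₙ ≥ 0 be integers, x₁,…,xₘ ∈ ℂ with m ≥ n, and A ∈ ℂ^{m×n} the matrix with entries A_{k,i} = xₖ^{dᵢ}. Let λ = d − δ(n), i.e. λᵢ = dᵢ + i − n. Then det(A*A) = ∑_{k ∈ C([m],n)} |s_λ(x_k) · V(x_k)|², where A* is the conjugate transpose, the sum is over n-element subsets of {1,…,m}, s_λ is the Schur polynomial in n variables, and V the Vandermonde determinant. -/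
open scoped BigOperators ComplexConjugate Matrix

private lemma strictMono_fin_le {n : ℕ} {g : Fin n → ℕ} (hg : StrictMono g) (k : Fin n) :
    (k : ℕ) ≤ g k := by
  suffices h : ∀ (j : ℕ) (k : Fin n), (k : ℕ) = j → j ≤ g k from h (k : ℕ) k rfl
  intro j
  induction j with
  | zero => intro k _; exact Nat.zero_le _
  | succ j ih =>
    intro k hk
    have hjn : j < n := by omega
    have hlt : (⟨j, hjn⟩ : Fin n) < k :=
      Fin.mk_lt_of_lt_val (by omega)
    have h2 := ih ⟨j, hjn⟩ rfl
    have h3 := hg hlt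
    have h4 : ((⟨j, hjn⟩ : Fin n) : ℕ) = j := rfl
    omega

/-- Cauchy–Binet formula. -/
private lemma cauchyBinet {m n : ℕ} (B : Matrix (Fin n) (Fin m) ℂ) (A : Matrix (Fin m) (Fin n) ℂ) :
    (B * A).det = ∑ s : {t : Finset (Fin m) // t.card = n},
      (B.submatrix id (s.1.orderEmbOfFin s.2)).det * (A.submatrix (s.1.orderEmbOfFin s.2) id).det := by
  classical
  -- Step 1: expand by multilinearity in the rows
  have h1 : (B * A).det = ∑ f : Fin n → Fin m, (∏ i, B i (f i)) * (A.submatrix f id).det := by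
    have e1 : (B * A).det = Matrix.detRowAlternating (fun i => ∑ k : Fin m, B i k • A k) := by
      congr 1
      ext i j
      simp [Matrix.mul_apply]
    rw [e1]
    rw [show (Matrix.detRowAlternating (fun i => ∑ k : Fin m, B i k • A k) : ℂ)
        = Matrix.detRowAlternating.toMultilinearMap
            (fun i => ∑ k : Fin m, (fun k => B i k • A k) k) from rfl]
    rw [MultilinearMap.map_sum]
    refine Finset.sum_congr rfl fun f _ => ?_
    have := Matrix.detRowAlternating.toMultilinearMap.map_smul_univ
      (fun i => B i (f i)) (fun i => A (f i))
    rw [this, smul_eq_mul]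
    rfl
  rw [h1]
  -- Step 2: non-injective terms vanish
  rw [← Finset.sum_filter_add_sum_filter_not Finset.univ (fun f => Function.Injective f)]
  have h2 : ∑ f ∈ Finset.univ.filter (fun f : Fin n → Fin m => ¬ Function.Injective f),
      (∏ i, B i (f i)) * (A.submatrix f id).det = 0 := by
    refine Finset.sum_eq_zero fun f hf => ?_
    replace hf := Finset.mem_filter.mp hf
    simp only [Function.Injective] at hf
    push_neg at hf
    obtain ⟨i, j, hij, hne⟩ := hf.2
    have : (A.submatrix f id).det = 0 :=
      Matrix.det_zero_of_row_eq hne (by funext c; simp [Matrix.submatrix, hij])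
    rw [this, mul_zero]
  rw [h2, add_zero]
  -- Step 3: reindex the injective functions by (subset, permutation) pairs
  rw [Finset.sum_subtype (Finset.univ.filter (fun f : Fin n → Fin m => Function.Injective f))
      (p := fun f => Function.Injective f) (fun f => by simp)
      (f := fun f => (∏ i, B i (f i)) * (A.submatrix f id).det)]
  have key : ∀ s : {t : Finset (Fin m) // t.card = n},
      (B.submatrix id (s.1.orderEmbOfFin s.2)).det * (A.submatrix (s.1.orderEmbOfFin s.2) id).det
      = ∑ σ : Equiv.Perm (Fin n),
          (∏ i, B i (s.1.orderEmbOfFin s.2 (σ i))) *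
            (A.submatrix (fun i => s.1.orderEmbOfFin s.2 (σ i)) id).det := by
    intro s
    set e := s.1.orderEmbOfFin s.2 with he
    have hB : (B.submatrix id e).det = ∑ σ : Equiv.Perm (Fin n),
        ((Equiv.Perm.sign σ : ℤ) : ℂ) * ∏ i, B i (e (σ i)) := by
      rw [← Matrix.det_transpose, Matrix.det_apply]
      refine Finset.sum_congr rfl fun σ _ => ?_
      rw [Units.smul_def, zsmul_eq_mul]
      rfl
    rw [hB, Finset.sum_mul]
    refine Finset.sum_congr rfl fun σ _ => ?_
    have hA : (A.submatrix (fun i => e (σ i)) id).det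
        = ((Equiv.Perm.sign σ : ℤ) : ℂ) * (A.submatrix e id).det := by
      have h4 : (A.submatrix (fun i => e (σ i)) id) = (A.submatrix e id).submatrix σ id := rfl
      rw [h4, Matrix.det_permute]
    rw [hA]
    ring
  -- the bijection
  let toF : ({t : Finset (Fin m) // t.card = n} × Equiv.Perm (Fin n)) →
      {f : Fin n → Fin m // Function.Injective f} :=
    fun p => ⟨fun i => p.1.1.orderEmbOfFin p.1.2 (p.2 i),
      (p.1.1.orderEmbOfFin p.1.2).injective.comp p.2.injective⟩
  have hbij : Function.Bijective toF := by
    constructor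
    · rintro ⟨s, σ⟩ ⟨t, τ⟩ hpq
      have hfun : (fun i => s.1.orderEmbOfFin s.2 (σ i)) = fun i => t.1.orderEmbOfFin t.2 (τ i) :=
        congrArg Subtype.val hpq
      have hst : s = t := by
        apply Subtype.ext
        apply Finset.coe_injective
        rw [← Finset.range_orderEmbOfFin s.1 s.2, ← Finset.range_orderEmbOfFin t.1 t.2]
        rw [← σ.surjective.range_comp (s.1.orderEmbOfFin s.2),
            ← τ.surjective.range_comp (t.1.orderEmbOfFin t.2)]
        exact congrArg Set.range hfun
      subst hst
      have hστ : σ = τ := by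
        apply Equiv.ext
        intro i
        exact (s.1.orderEmbOfFin s.2).injective (congrFun hfun i)
      rw [hστ]
    · rintro ⟨f, hf⟩
      have hcard : (Finset.univ.image f).card = n := by
        rw [Finset.card_image_of_injective _ hf, Finset.card_univ, Fintype.card_fin]
      have hmem : ∀ i, f i ∈ Finset.univ.image f := fun i =>
        Finset.mem_image_of_mem f (Finset.mem_univ i)
      let u : Fin n → Fin n := fun i =>
        ((Finset.univ.image f).orderIsoOfFin hcard).symm ⟨f i, hmem i⟩
      have hu : Function.Injective u := by
        intro i j hij
        have := ((Finset.univ.image f).orderIsoOfFin hcard).symm.injective hij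
        exact hf (congrArg Subtype.val this)
      refine ⟨⟨⟨Finset.univ.image f, hcard⟩,
        Equiv.ofBijective u (Finite.injective_iff_bijective.mp hu)⟩, ?_⟩
      apply Subtype.ext
      funext i
      show (Finset.univ.image f).orderEmbOfFin hcard (u i) = f i
      rw [← Finset.coe_orderIsoOfFin_apply]
      simp [u]
  rw [← Fintype.sum_bijective toF hbij
      (fun p => (∏ i, B i ((toF p).1 i)) * (A.submatrix (toF p).1 id).det)
      (fun f => (∏ i, B i (f.1 i)) * (A.submatrix f.1 id).det) (fun p => rfl)]
  rw [Fintype.sum_prod_type]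
  exact Finset.sum_congr rfl fun s _ => (key s).symm

private lemma schur_mul_vand {n : ℕ} (lam : Fin n → ℕ) (z : Fin n → ℂ) :
    schur lam z * vand z
      = (Matrix.of fun i j : Fin n => z i ^ (lam j + (n - 1 - (j : ℕ)))).det := by
  by_cases h : vand z = 0
  · rw [schur, h, div_zero, zero_mul]
    obtain ⟨i, j, hij, hz⟩ : ∃ i j : Fin n, i ≠ j ∧ z i = z j := by
      by_contra hc
      push_neg at hc
      refine absurd h ?_
      rw [vand]
      apply Finset.prod_ne_zero_iff.mpr
      intro i _
      apply Finset.prod_ne_zero_iff.mpr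
      intro j hj
      have : i ≠ j := ne_of_lt (Finset.mem_Ioi.mp hj)
      exact sub_ne_zero_of_ne (hc i j this)
    exact (Matrix.det_zero_of_row_eq hij (by funext c; simp [hz])).symm
  · rw [schur, div_mul_cancel₀ _ h]

/-- for `d₁ > … > dₙ ≥ 0`, the matrix `A` with `A_{k,i} = xₖ^{dᵢ}` satisfies
`det(A*A) = ∑_{k ∈ C([m],n)} |s_λ(x_k) V(x_k)|²` where `λ = d − δ(n)`. -/
theorem det_conjTranspose_mul_self (m n : ℕ) (hmn : n ≤ m)
    (d : Fin n → ℕ) (hd : StrictAnti d) (x : Fin m → ℂ)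
    (A : Matrix (Fin m) (Fin n) ℂ) (hA : ∀ k i, A k i = x k ^ d i) :
    (Aᴴ * A).det =
      ∑ s : {t : Finset (Fin m) // t.card = n},
        ((‖schur (fun i => d i - (n - 1 - (i : ℕ))) (subvec x s) *
          vand (subvec x s)‖ : ℂ)) ^ 2 := by
  classical
  rw [cauchyBinet]
  refine Finset.sum_congr rfl fun s _ => ?_
  have hle : ∀ j : Fin n, n - 1 - (j : ℕ) ≤ d j := by
    intro j
    have hg : StrictMono (fun k : Fin n => d k.rev) :=
      fun a b hab => hd (Fin.rev_lt_rev.mpr hab)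
    have h2 := strictMono_fin_le hg j.rev
    rw [Fin.rev_rev] at h2
    have h3 : ((j.rev : Fin n) : ℕ) = n - ((j : ℕ) + 1) := Fin.val_rev j
    omega
  have hD : (A.submatrix (s.1.orderEmbOfFin s.2) id).det
      = (Matrix.of fun i j : Fin n => subvec x s i ^ d j).det := by
    congr 1
    ext i j
    simp [hA, subvec]
  have hS : schur (fun i => d i - (n - 1 - (i : ℕ))) (subvec x s) * vand (subvec x s)
      = (Matrix.of fun i j : Fin n => subvec x s i ^ d j).det := by
    rw [schur_mul_vand]
    congr 1
    ext i j
    rw [Matrix.of_apply, Matrix.of_apply, Nat.sub_add_cancel (hle j)]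
  have hBdet : (Aᴴ.submatrix id (s.1.orderEmbOfFin s.2)).det
      = (starRingEnd ℂ) ((A.submatrix (s.1.orderEmbOfFin s.2) id).det) := by
    have h5 : Aᴴ.submatrix id (s.1.orderEmbOfFin s.2) = (A.submatrix (s.1.orderEmbOfFin s.2) id)ᴴ := rfl
    rw [h5, Matrix.det_conjTranspose]
    rfl
  rw [hBdet, hD, ← hS]
  set w := schur (fun i => d i - (n - 1 - (i : ℕ))) (subvec x s) * vand (subvec x s) with hw
  rw [← Complex.ofReal_pow, ← Complex.normSq_eq_norm_sq, mul_comm, Complex.mul_conj]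
end

section
/- Let d₁ > d₂ > … > dₙ ≥ 0 be integers, and let x₁,…,xₘ be complex numbers among which there are at least n distinct positive real values. Then the matrix A ∈ ℂ^{m×n} with entries A_{k,i} = xₖ^{dᵢ} is injective; equivalently, A*A is invertible, so the normal equation A*A a = A* y has a unique solution for every y ∈ ℂᵐ. -/
open scoped BigOperators ComplexConjugate Matrix

open Polynomial in
/-- A nonzero real polynomial with at most `t` nonzero terms has fewer than `t`
distinct positive roots. -/
lemma fewnomial_pos_roots : ∀ t : ℕ, ∀ p : ℝ[X], p ≠ 0 → p.support.card ≤ t →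
    ∀ S : Finset ℝ, (∀ r ∈ S, 0 < r ∧ p.eval r = 0) → S.card < t := by
  intro t
  induction t with
  | zero =>
    intro p hp hsupp S hS
    exact absurd (Finset.card_eq_zero.mp (Nat.le_zero.mp hsupp)) (by simpa using hp)
  | succ t ih =>
    intro p hp hsupp S hS
    by_contra hcard
    push_neg at hcard
    obtain ⟨S', hS'sub, hS'card⟩ := Finset.exists_subset_card_eq hcard
    -- factor out X^k
    set k := p.natTrailingDegree with hk
    have hdvd : X ^ k ∣ p := X_pow_dvd_iff.mpr fun d hd =>
      coeff_eq_zero_of_lt_natTrailingDegree hd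
    obtain ⟨q, hq⟩ := hdvd
    have hq0 : q.coeff 0 ≠ 0 := by
      have h1 : p.coeff k ≠ 0 := by
        have := trailingCoeff_nonzero_iff_nonzero.mpr hp
        simpa [trailingCoeff, hk] using this
      intro h
      apply h1
      have : p.coeff (0 + k) = q.coeff 0 := by rw [hq, coeff_X_pow_mul]
      simpa [h] using this
    have hqne : q ≠ 0 := fun h => hq0 (by simp [h])
    -- support of q
    have hqsupp : q.support.card ≤ t + 1 := by
      refine le_trans ?_ hsupp
      apply Finset.card_le_card_of_injOn (fun i => i + k)
      · intro i hi
        rw [Finset.mem_coe, Polynomial.mem_support_iff] at hi ⊢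
        rwa [hq, coeff_X_pow_mul]
      · intro a _ b _ h; exact add_right_cancel h
    have h0supp : 0 ∈ q.support := Polynomial.mem_support_iff.mpr hq0
    -- derivative support
    have hdsupp : (derivative q).support.card ≤ t := by
      have h1 : (derivative q).support.card ≤ (q.support.erase 0).card := by
        apply Finset.card_le_card_of_injOn (fun i => i + 1)
        · intro i hi
          rw [Finset.mem_coe, Polynomial.mem_support_iff] at hi
          rw [Polynomial.coeff_derivative] at hi
          rw [Finset.mem_coe, Finset.mem_erase, Polynomial.mem_support_iff]
          constructor
          · exact Nat.succ_ne_zero i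
          · intro h; apply hi; simp [h]
        · intro a _ b _ h; exact add_right_cancel h
      rw [Finset.card_erase_of_mem h0supp] at h1
      omega
    -- roots of q on S'
    have hqroot : ∀ r ∈ S', 0 < r ∧ q.eval r = 0 := by
      intro r hr
      obtain ⟨hrpos, hre⟩ := hS r (hS'sub hr)
      refine ⟨hrpos, ?_⟩
      rw [hq, eval_mul, eval_pow, eval_X] at hre
      exact (mul_eq_zero.mp hre).resolve_left (pow_ne_zero _ hrpos.ne')
    -- q is not constant... derivative nonzero
    have hd0 : derivative q ≠ 0 := by
      intro h
      have hc := eq_C_of_derivative_eq_zero h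
      have hne : S'.Nonempty := Finset.card_pos.mp (by omega)
      obtain ⟨r, hr⟩ := hne
      obtain ⟨_, hre⟩ := hqroot r hr
      rw [hc, eval_C] at hre
      exact hq0 hre
    -- Rolle: build t roots of derivative q
    set e := S'.orderEmbOfFin hS'card with he
    have heS : ∀ i, e i ∈ S' := fun i => S'.orderEmbOfFin_mem hS'card i
    have hc : ∀ i : Fin t, ∃ c, e i.castSucc < c ∧ c < e i.succ ∧
        (derivative q).eval c = 0 := by
      intro i
      have hab : e i.castSucc < e i.succ := (S'.orderEmbOfFin hS'card).strictMono
        Fin.castSucc_lt_succ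
      have heq : q.eval (e i.castSucc) = q.eval (e i.succ) := by
        rw [(hqroot _ (heS _)).2, (hqroot _ (heS _)).2]
      obtain ⟨c, hcmem, hcder⟩ := exists_deriv_eq_zero hab q.continuousOn heq
      refine ⟨c, hcmem.1, hcmem.2, ?_⟩
      rwa [q.deriv] at hcder
    choose c hc1 hc2 hc3 using hc
    have hcinj : Function.Injective c := by
      intro i j hij
      by_contra hne
      wlog hlt : i < j generalizing i j
      · exact this hij.symm (Ne.symm hne) (by omega)
      have : c i < c j := by
        calc c i < e i.succ := hc2 i
          _ ≤ e j.castSucc := (S'.orderEmbOfFin hS'card).monotone (by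
              simp [Fin.le_def]; omega)
          _ < c j := hc1 j
      exact absurd hij this.ne
    set T := Finset.image c Finset.univ with hT
    have hTcard : T.card = t := by
      rw [hT, Finset.card_image_of_injective _ hcinj, Finset.card_univ, Fintype.card_fin]
    have := ih (derivative q) hd0 hdsupp T (by
      intro r hr
      rw [hT, Finset.mem_image] at hr
      obtain ⟨i, _, rfl⟩ := hr
      refine ⟨lt_trans ?_ (hc1 i), hc3 i⟩
      exact (hqroot _ (heS i.castSucc)).1)
    omega

open Polynomial in
/-- Real linear combinations of `n` distinct powers vanishing at `n` distinct positive
reals must be trivial. -/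
lemma real_coeffs_vanish (n : ℕ) (d : Fin n → ℕ) (hd : Function.Injective d)
    (S : Finset ℝ) (hcard : n ≤ S.card) (hpos : ∀ r ∈ S, 0 < r)
    (a : Fin n → ℝ) (ha : ∀ r ∈ S, ∑ i, a i * r ^ d i = 0) : a = 0 := by
  set p : ℝ[X] := ∑ i, C (a i) * X ^ d i with hp
  have hcoeff : ∀ i, p.coeff (d i) = a i := by
    intro i
    rw [hp, finset_sum_coeff]
    rw [Finset.sum_eq_single i]
    · simp
    · intro j _ hji
      rw [coeff_C_mul, coeff_X_pow, if_neg (fun h => hji ((hd h).symm)), mul_zero]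
    · simp
  have hpz : p = 0 := by
    by_contra hpne
    have hsupp : p.support.card ≤ n := by
      have : p.support ⊆ Finset.image d Finset.univ := by
        intro j hj
        rw [Polynomial.mem_support_iff] at hj
        by_contra hjim
        apply hj
        rw [hp, finset_sum_coeff]
        apply Finset.sum_eq_zero
        intro i _
        rw [coeff_C_mul, coeff_X_pow, if_neg, mul_zero]
        intro h
        exact hjim (Finset.mem_image.mpr ⟨i, Finset.mem_univ i, h.symm⟩)
      calc p.support.card ≤ (Finset.image d Finset.univ).card := Finset.card_le_card this
        _ ≤ (Finset.univ : Finset (Fin n)).card := Finset.card_image_le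
        _ = n := by simp
    have := fewnomial_pos_roots n p hpne hsupp S (by
      intro r hr
      refine ⟨hpos r hr, ?_⟩
      rw [hp]
      simp only [eval_finset_sum, eval_mul, eval_C, eval_pow, eval_X]
      exact ha r hr)
    omega
  funext i
  have := hcoeff i
  rw [hpz] at this
  simpa using this.symm

/-- The kernel step: complex coefficients version. -/
lemma complex_coeffs_vanish (n : ℕ) (d : Fin n → ℕ) (hd : Function.Injective d)
    (S : Finset ℝ) (hcard : n ≤ S.card) (hpos : ∀ r ∈ S, 0 < r)
    (v : Fin n → ℂ) (hv : ∀ r ∈ S, ∑ i, (r : ℂ) ^ d i * v i = 0) : v = 0 := by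
  have hre : ∀ r ∈ S, ∑ i, (v i).re * r ^ d i = 0 := by
    intro r hr
    have := congrArg Complex.re (hv r hr)
    rw [Complex.re_sum] at this
    simpa [← Complex.ofReal_pow, mul_comm] using this
  have him : ∀ r ∈ S, ∑ i, (v i).im * r ^ d i = 0 := by
    intro r hr
    have := congrArg Complex.im (hv r hr)
    rw [Complex.im_sum] at this
    simpa [← Complex.ofReal_pow, mul_comm] using this
  have h1 := real_coeffs_vanish n d hd S hcard hpos _ hre
  have h2 := real_coeffs_vanish n d hd S hcard hpos _ him
  funext i
  have e1 := congrFun h1 i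
  have e2 := congrFun h2 i
  simp only [Pi.zero_apply] at e1 e2 ⊢
  exact Complex.ext e1 e2

/-- if among `x₁,…,xₘ` there are at least `n` distinct positive real values,
then the matrix `A` with `A_{k,i} = xₖ^{dᵢ}` is injective, `A*A` is invertible, and the
normal equation `A*A a = A* y` has a unique solution for every `y`. -/
theorem normal_equation_unique_solution (m n : ℕ) (d : Fin n → ℕ) (hd : StrictAnti d)
    (x : Fin m → ℂ)
    (hx : ∃ s : Finset (Fin m), s.card = n ∧ (∀ k ∈ s, ∃ r : ℝ, 0 < r ∧ x k = r) ∧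
      Set.InjOn x s)
    (A : Matrix (Fin m) (Fin n) ℂ) (hA : ∀ k i, A k i = x k ^ d i) :
    Function.Injective A.mulVec ∧ IsUnit (Aᴴ * A) ∧
      ∀ y : Fin m → ℂ, ∃! a : Fin n → ℂ, (Aᴴ * A).mulVec a = Aᴴ.mulVec y := by
  obtain ⟨s, hscard, hsreal, hsinj⟩ := hx
  -- the kernel of A.mulVec is trivial
  have hker : ∀ v : Fin n → ℂ, A.mulVec v = 0 → v = 0 := by
    intro v hv
    set S : Finset ℝ := s.image (fun k => (x k).re) with hS
    have hxre : ∀ k ∈ s, x k = ((x k).re : ℂ) := by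
      intro k hk
      obtain ⟨r, _, hr⟩ := hsreal k hk
      rw [hr]; simp
    have hScard : S.card = n := by
      rw [hS, Finset.card_image_of_injOn, hscard]
      intro a ha b hb hab
      apply hsinj ha hb
      rw [hxre a ha, hxre b hb]
      exact_mod_cast hab
    have hSpos : ∀ r ∈ S, 0 < r := by
      intro r hr
      rw [hS, Finset.mem_image] at hr
      obtain ⟨k, hk, rfl⟩ := hr
      obtain ⟨r', hr', hxr⟩ := hsreal k hk
      rw [hxr]; simpa using hr'
    apply complex_coeffs_vanish n d hd.injective S (le_of_eq hScard.symm) hSpos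
    intro r hr
    rw [hS, Finset.mem_image] at hr
    obtain ⟨k, hk, rfl⟩ := hr
    have := congrFun hv k
    rw [Matrix.mulVec, dotProduct] at this
    simp only [Pi.zero_apply] at this
    rw [← this]
    apply Finset.sum_congr rfl
    intro i _
    rw [hA k i, hxre k hk]
    simp
  have hinj : Function.Injective A.mulVec := by
    intro u w huw
    have : A.mulVec (u - w) = 0 := by
      rw [Matrix.mulVec_sub, huw, sub_self]
    have := hker _ this
    exact sub_eq_zero.mp this
  -- Aᴴ * A is a unit
  have hker2 : ∀ v : Fin n → ℂ, (Aᴴ * A).mulVec v = 0 → v = 0 := by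
    intro v hv
    have h1 : star v ⬝ᵥ ((Aᴴ * A).mulVec v) = 0 := by rw [hv, dotProduct_zero]
    rw [← Matrix.mulVec_mulVec, Matrix.dotProduct_mulVec, ← Matrix.star_mulVec] at h1
    have h2 : A.mulVec v = 0 := by
      open scoped ComplexOrder in
      exact dotProduct_star_self_eq_zero.mp h1
    have : A.mulVec v = A.mulVec 0 := by rw [h2, Matrix.mulVec_zero]
    exact hinj this
  have hinj2 : Function.Injective (Aᴴ * A).mulVec := by
    intro u w huw
    have : (Aᴴ * A).mulVec (u - w) = 0 := by
      rw [Matrix.mulVec_sub, huw, sub_self]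
    exact sub_eq_zero.mp (hker2 _ this)
  have hunit : IsUnit (Aᴴ * A) := Matrix.mulVec_injective_iff_isUnit.mp hinj2
  refine ⟨hinj, hunit, ?_⟩
  intro y
  have hdet : IsUnit (Aᴴ * A).det := (Matrix.isUnit_iff_isUnit_det _).mp hunit
  have cancel : ∀ w : Fin n → ℂ, (Aᴴ * A).mulVec ((Aᴴ * A)⁻¹.mulVec w) = w := by
    intro w
    rw [Matrix.mulVec_mulVec, Matrix.mul_nonsing_inv _ hdet, Matrix.one_mulVec]
  refine ⟨(Aᴴ * A)⁻¹.mulVec (Aᴴ.mulVec y), cancel _, ?_⟩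
  intro a ha
  exact hinj2 (ha.trans (cancel _).symm)
end
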